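/- arXiv:1604.03047 — 4 statements merged into one kernel-verified Lean document; each statement's English description precedes it below -/
import Mathlib

section
/- Let m ∈ ℕ be fixed and (l_n) a sequence of natural numbers with l_n ≤ n - m. If the sequence of ratios C(n-m, l_n)/C(n, l_n) converges as n → ∞, then the sequence l_n/n converges to some α ∈ [0,1]. -/
open Filter

lemma choose_prod_eq_aux (m n l : ℕ) (h : l + m ≤ n) :
    (n - m).choose l * ∏ i ∈ Finset.range m, (n - i) =
    n.choose l * ∏ i ∈ Finset.range m, (n - l - i) := by
  induction m with
  | zero => simp
  | succ m ih =>
    have h' : l + m ≤ n := by omega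
    rw [Finset.prod_range_succ, Finset.prod_range_succ]
    have key := Nat.choose_mul_succ_eq (n - m - 1) l
    have h1 : n - m - 1 + 1 = n - m := by omega
    rw [h1] at key
    have h2 : n - (m + 1) = n - m - 1 := by omega
    rw [h2]
    calc (n - m - 1).choose l * ((∏ i ∈ Finset.range m, (n - i)) * (n - m))
        = ((n - m - 1).choose l * (n - m)) * ∏ i ∈ Finset.range m, (n - i) := by ring
      _ = ((n - m).choose l * (n - m - l)) * ∏ i ∈ Finset.range m, (n - i) := by rw [key]
      _ = ((n - m).choose l * ∏ i ∈ Finset.range m, (n - i)) * (n - m - l) := by ring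
      _ = (n.choose l * ∏ i ∈ Finset.range m, (n - l - i)) * (n - m - l) := by rw [ih h']
      _ = n.choose l * ((∏ i ∈ Finset.range m, (n - l - i)) * (n - l - m)) := by
          rw [show n - m - l = n - l - m by omega]; ring

lemma choose_ratio_eq_aux (m n l : ℕ) (h : l + m ≤ n) :
    ((n - m).choose l : ℝ) / (n.choose l) =
    ∏ i ∈ Finset.range m, (((n : ℝ) - l - i) / ((n : ℝ) - i)) := by
  have hc : (0 : ℝ) < (n.choose l : ℝ) := by
    exact_mod_cast Nat.choose_pos (by omega)
  have hP : (0 : ℝ) < ∏ i ∈ Finset.range m, ((n : ℝ) - i) := by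
    apply Finset.prod_pos
    intro i hi
    have hi' : i < m := Finset.mem_range.mp hi
    have : (i : ℝ) < (n : ℝ) := by exact_mod_cast (by omega : i < n)
    linarith
  rw [Finset.prod_div_distrib, div_eq_div_iff hc.ne' hP.ne']
  have e1 : (∏ i ∈ Finset.range m, ((n : ℝ) - i)) =
      ((∏ i ∈ Finset.range m, (n - i) : ℕ) : ℝ) := by
    rw [Nat.cast_prod]
    refine Finset.prod_congr rfl fun i hi => ?_
    have hi' : i < m := Finset.mem_range.mp hi
    rw [Nat.cast_sub (by omega)]
  have e2 : (∏ i ∈ Finset.range m, ((n : ℝ) - l - i)) =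
      ((∏ i ∈ Finset.range m, (n - l - i) : ℕ) : ℝ) := by
    rw [Nat.cast_prod]
    refine Finset.prod_congr rfl fun i hi => ?_
    have hi' : i < m := Finset.mem_range.mp hi
    rw [Nat.cast_sub (by omega), Nat.cast_sub (by omega)]
  rw [e1, e2]
  exact_mod_cast (choose_prod_eq_aux m n l h).trans (mul_comm _ _)

theorem binom_ratio_converges_implies_ratio_converges (m : ℕ) (hm : 1 ≤ m)
    (l : ℕ → ℕ) (hl : ∀ n, l n ≤ n - m)
    (hconv : ∃ L : ℝ, Tendsto (fun n => ((n - m).choose (l n) : ℝ) / (n.choose (l n)))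
      atTop (nhds L)) :
    ∃ α : ℝ, α ∈ Set.Icc (0:ℝ) 1 ∧ Tendsto (fun n => (l n : ℝ) / n) atTop (nhds α) := by
  obtain ⟨L, hL⟩ := hconv
  set r : ℕ → ℝ := fun n => ((n - m).choose (l n) : ℝ) / (n.choose (l n)) with hrdef
  set x : ℕ → ℝ := fun n => 1 - (l n : ℝ) / n with hxdef
  set y : ℕ → ℝ := fun n => 1 - (l n : ℝ) / ((n : ℝ) - m + 1) with hydef
  set d : ℕ → ℝ := fun n => (m : ℝ) / ((n : ℝ) - m + 1) with hddef
  have hev : ∀ᶠ n in atTop, y n ^ m ≤ r n ∧ r n ≤ x n ^ m ∧ 0 ≤ y n ∧ y n ≤ x n ∧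
      x n ≤ y n + d n ∧ 0 ≤ (l n : ℝ) / n ∧ (l n : ℝ) / n ≤ 1 := by
    filter_upwards [eventually_ge_atTop (m + 1)] with n hn
    have hlm : l n + m ≤ n := by have := hl n; omega
    have hmn : (m : ℝ) + 1 ≤ (n : ℝ) := by exact_mod_cast hn
    have hN : (0 : ℝ) < (n : ℝ) := by linarith [Nat.cast_nonneg (α := ℝ) m]
    have hA : (0 : ℝ) < (n : ℝ) - m + 1 := by linarith
    have hm1 : (1 : ℝ) ≤ (m : ℝ) := by exact_mod_cast hm
    have hlR : (l n : ℝ) + m ≤ (n : ℝ) := by exact_mod_cast hlm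
    have hl0 : (0 : ℝ) ≤ (l n : ℝ) := Nat.cast_nonneg _
    have hy0 : 0 ≤ y n := by
      simp only [hydef]
      have : (l n : ℝ) / ((n : ℝ) - m + 1) ≤ 1 := by
        rw [div_le_one hA]; linarith
      linarith
    have hyx : y n ≤ x n := by
      simp only [hydef, hxdef]
      have h1 : (l n : ℝ) / n ≤ (l n : ℝ) / ((n : ℝ) - m + 1) := by
        apply div_le_div_of_nonneg_left hl0 hA
        linarith
      linarith
    have hid : r n = ∏ i ∈ Finset.range m,
        (((n : ℝ) - l n - i) / ((n : ℝ) - i)) := choose_ratio_eq_aux m n (l n) hlm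
    have hfac : ∀ i ∈ Finset.range m,
        0 ≤ ((n : ℝ) - l n - i) / ((n : ℝ) - i) ∧
        y n ≤ ((n : ℝ) - l n - i) / ((n : ℝ) - i) ∧
        ((n : ℝ) - l n - i) / ((n : ℝ) - i) ≤ x n := by
      intro i hi
      have hi' : i < m := Finset.mem_range.mp hi
      have hiR : (i : ℝ) + 1 ≤ (m : ℝ) := by exact_mod_cast hi'
      have hNi : (0 : ℝ) < (n : ℝ) - i := by linarith
      refine ⟨div_nonneg (by linarith) hNi.le, ?_, ?_⟩
      · have e : ((n : ℝ) - l n - i) / ((n : ℝ) - i) = 1 - (l n : ℝ) / ((n : ℝ) - i) := by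
          field_simp
          ring
        rw [e]
        simp only [hydef]
        have h1 : (l n : ℝ) / ((n : ℝ) - i) ≤ (l n : ℝ) / ((n : ℝ) - m + 1) := by
          apply div_le_div_of_nonneg_left hl0 hA
          linarith
        linarith
      · have hxe : x n = ((n : ℝ) - l n) / n := by
          simp only [hxdef]; field_simp
        rw [hxe, div_le_div_iff₀ hNi hN]
        nlinarith [mul_nonneg (Nat.cast_nonneg (α := ℝ) i) hl0]
    constructor
    · rw [hid]
      calc y n ^ m = ∏ _i ∈ Finset.range m, y n := by
            rw [Finset.prod_const, Finset.card_range]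
        _ ≤ ∏ i ∈ Finset.range m, (((n : ℝ) - l n - i) / ((n : ℝ) - i)) :=
            Finset.prod_le_prod (fun i _ => hy0) (fun i hi => (hfac i hi).2.1)
    refine ⟨?_, hy0, hyx, ?_, by positivity, ?_⟩
    · rw [hid]
      calc ∏ i ∈ Finset.range m, (((n : ℝ) - l n - i) / ((n : ℝ) - i))
          ≤ ∏ _i ∈ Finset.range m, x n :=
            Finset.prod_le_prod (fun i hi => (hfac i hi).1) (fun i hi => (hfac i hi).2.2)
        _ = x n ^ m := by rw [Finset.prod_const, Finset.card_range]
    · simp only [hxdef, hydef, hddef]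
      have h1 : (l n : ℝ) / ((n : ℝ) - m + 1) - (l n : ℝ) / n ≤ (m : ℝ) / ((n : ℝ) - m + 1) := by
        rw [div_sub_div _ _ hA.ne' hN.ne', div_le_div_iff₀ (by positivity) hA]
        have hln : (l n : ℝ) ≤ n := by linarith
        have key : (l n : ℝ) * ((m : ℝ) - 1) ≤ (n : ℝ) * m := by
          have := mul_le_mul_of_nonneg_right hln (by linarith : (0:ℝ) ≤ (m : ℝ) - 1)
          nlinarith [hN.le]
        linarith [mul_le_mul_of_nonneg_right key hA.le]
      linarith
    · rw [div_le_one hN]; linarith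
  -- d tends to 0
  have hA_top : Tendsto (fun n : ℕ => (n : ℝ) - m + 1) atTop atTop := by
    have := tendsto_atTop_add_const_right atTop (1 - (m : ℝ))
      (tendsto_natCast_atTop_atTop (R := ℝ))
    exact this.congr fun n => by ring
  have hd0 : Tendsto d atTop (nhds 0) := Tendsto.div_atTop tendsto_const_nhds hA_top
  have hminv : (0 : ℝ) ≤ (m : ℝ)⁻¹ := by positivity
  have hs : Tendsto (fun n => r n ^ ((m : ℝ)⁻¹)) atTop (nhds (L ^ ((m : ℝ)⁻¹))) :=
    hL.rpow_const (Or.inr hminv)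
  have hr0 : ∀ n, 0 ≤ r n := fun n => div_nonneg (Nat.cast_nonneg _) (Nat.cast_nonneg _)
  have hxt : Tendsto x atTop (nhds (L ^ ((m : ℝ)⁻¹))) := by
    apply tendsto_of_tendsto_of_tendsto_of_le_of_le' hs (by simpa using hs.add hd0)
    · filter_upwards [hev] with n hn
      obtain ⟨h1, h2, h3, h4, h5, _, _⟩ := hn
      have hx0 : 0 ≤ x n := le_trans h3 h4
      calc r n ^ ((m : ℝ)⁻¹) ≤ (x n ^ m) ^ ((m : ℝ)⁻¹) :=
            Real.rpow_le_rpow (hr0 n) h2 hminv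
        _ = x n := Real.pow_rpow_inv_natCast hx0 (by omega)
    · filter_upwards [hev] with n hn
      obtain ⟨h1, h2, h3, h4, h5, _, _⟩ := hn
      have hyr : y n ≤ r n ^ ((m : ℝ)⁻¹) := by
        calc y n = (y n ^ m) ^ ((m : ℝ)⁻¹) :=
              (Real.pow_rpow_inv_natCast h3 (by omega)).symm
          _ ≤ r n ^ ((m : ℝ)⁻¹) := Real.rpow_le_rpow (pow_nonneg h3 m) h1 hminv
      exact le_trans h5 (add_le_add_left hyr _)
  have ht : Tendsto (fun n => (l n : ℝ) / n) atTop (nhds (1 - L ^ ((m : ℝ)⁻¹))) := by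
    refine (tendsto_const_nhds.sub hxt).congr fun n => ?_
    simp only [hxdef]; ring
  refine ⟨1 - L ^ ((m : ℝ)⁻¹), ⟨?_, ?_⟩, ht⟩
  · exact ge_of_tendsto ht (by filter_upwards [hev] with n hn; exact hn.2.2.2.2.2.1)
  · exact le_of_tendsto ht (by filter_upwards [hev] with n hn; exact hn.2.2.2.2.2.2)
end

section
/- Let ξ_1, ξ_2, … be i.i.d. geometric random variables with parameter θ ∈ (0,1) on ℕ, and let M_n, L_n be the running maximum and its multiplicity. For n > m and l ≥ k, P(M_n = i, L_n = l | M_m = i, L_m = k) = C(n-m, l-k) (θ(1-θ)^{i-1})^{l-k} (1-(1-θ)^{i-1})^{n-m-(l-k)}. -/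
open MeasureTheory ProbabilityTheory


lemma gmmcd_tsum (θ : ℝ) (hθ0 : 0 < θ) (hθ1 : θ < 1) (c : ℕ) :
    ∑' j : ℕ, ENNReal.ofReal (θ * (1 - θ) ^ (j + c)) = ENNReal.ofReal ((1 - θ) ^ c) := by
  have h1 : (0:ℝ) ≤ 1 - θ := by linarith
  have h2 : 1 - θ < 1 := by linarith
  have hfe : (fun j : ℕ => θ * (1 - θ) ^ (j + c)) = fun j : ℕ => (θ * (1 - θ) ^ c) * (1 - θ) ^ j := by
    funext j; rw [pow_add]; ring
  have hsumm : Summable (fun j : ℕ => θ * (1 - θ) ^ (j + c)) := by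
    rw [hfe]; exact (summable_geometric_of_lt_one h1 h2).mul_left _
  rw [← ENNReal.ofReal_tsum_of_nonneg (fun j => by positivity) hsumm]
  congr 1
  rw [hfe, tsum_mul_left, tsum_geometric_of_lt_one h1 h2]
  have : 1 - (1 - θ) = θ := by ring
  rw [this]
  field_simp

lemma gmmcd_tail {Ω : Type*} [MeasurableSpace Ω] (P : Measure Ω) (θ : ℝ)
    (hθ0 : 0 < θ) (hθ1 : θ < 1) (X : Ω → ℕ) (hX : Measurable X)
    (hg : ∀ i : ℕ, P {ω | X ω = i + 1} = ENNReal.ofReal (θ * (1 - θ) ^ i)) (c : ℕ) :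
    P {ω | c + 1 ≤ X ω} = ENNReal.ofReal ((1 - θ) ^ c) := by
  have hset : {ω | c + 1 ≤ X ω} = ⋃ j : ℕ, {ω | X ω = (j + c) + 1} := by
    ext ω
    simp only [Set.mem_setOf_eq, Set.mem_iUnion]
    constructor
    · intro h; exact ⟨X ω - c - 1, by omega⟩
    · rintro ⟨j, hj⟩; omega
  rw [hset, measure_iUnion, ← gmmcd_tsum θ hθ0 hθ1 c]
  · exact tsum_congr fun j => hg (j + c)
  · intro a b hab
    refine Set.disjoint_left.mpr fun ω h1 h2 => ?_
    simp only [Set.mem_setOf_eq] at h1 h2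
    exact hab (by omega)
  · intro j
    exact hX (measurableSet_singleton _)

lemma gmmcd_lt {Ω : Type*} [MeasurableSpace Ω] (P : Measure Ω) [IsProbabilityMeasure P] (θ : ℝ)
    (hθ0 : 0 < θ) (hθ1 : θ < 1) (X : Ω → ℕ) (hX : Measurable X)
    (hg : ∀ i : ℕ, P {ω | X ω = i + 1} = ENNReal.ofReal (θ * (1 - θ) ^ i))
    (i : ℕ) (hi : 1 ≤ i) :
    P {ω | X ω < i} = ENNReal.ofReal (1 - (1 - θ) ^ (i - 1)) := by
  have h1 : i - 1 + 1 = i := by omega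
  have hset : {ω | X ω < i} = {ω | (i - 1) + 1 ≤ X ω}ᶜ := by
    ext ω; simp only [Set.mem_setOf_eq, Set.mem_compl_iff, not_le]; omega
  have hms : MeasurableSet {ω | (i - 1) + 1 ≤ X ω} := by
    have : {ω | (i - 1) + 1 ≤ X ω} = X ⁻¹' Set.Ici ((i-1)+1) := rfl
    rw [this]; exact hX measurableSet_Ici
  rw [hset, measure_compl hms (measure_ne_top P _), gmmcd_tail P θ hθ0 hθ1 X hX hg (i-1),
    measure_univ, ← ENNReal.ofReal_one, ← ENNReal.ofReal_sub _ (pow_nonneg (by linarith) _)]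

lemma gmmcd_binom {Ω : Type*} [MeasurableSpace Ω] {P : Measure Ω}
    {ξ : ℕ → Ω → ℕ} (hmeas : ∀ a, Measurable (ξ a))
    (hindep : iIndepFun ξ P)
    (T : Finset ℕ) (i j : ℕ) (pe ql : ENNReal)
    (hp : ∀ a ∈ T, P {ω | ξ a ω = i} = pe) (hq : ∀ a ∈ T, P {ω | ξ a ω < i} = ql) :
    P {ω | ((T.filter fun a => ξ a ω = i)).card = j ∧ ∀ a ∈ T, ξ a ω ≤ i}
      = (T.card.choose j : ENNReal) * (pe ^ j * ql ^ (T.card - j)) := by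
  classical
  set D : Finset ℕ → Set Ω :=
    fun S => ⋂ a ∈ T, (if a ∈ S then {ω | ξ a ω = i} else {ω | ξ a ω < i}) with hD
  have hDmeas : ∀ S, MeasurableSet (D S) := by
    intro S
    refine MeasurableSet.biInter T.countable_toSet fun a _ => ?_
    split
    · exact hmeas a (measurableSet_singleton i)
    · exact hmeas a measurableSet_Iio
  have hset : {ω | ((T.filter fun a => ξ a ω = i)).card = j ∧ ∀ a ∈ T, ξ a ω ≤ i}
      = ⋃ S ∈ T.powersetCard j, D S := by
    ext ω
    simp only [Set.mem_setOf_eq, Set.mem_iUnion, Finset.mem_powersetCard, hD, Set.mem_iInter]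
    constructor
    · rintro ⟨hcard, hle⟩
      refine ⟨T.filter (fun a => ξ a ω = i), ⟨Finset.filter_subset _ _, hcard⟩, fun a ha => ?_⟩
      rcases eq_or_ne (ξ a ω) i with h | h
      · have hmem : a ∈ T.filter (fun b => ξ b ω = i) := Finset.mem_filter.mpr ⟨ha, h⟩
        rw [if_pos hmem]; exact h
      · have hmem : a ∉ T.filter (fun b => ξ b ω = i) := fun hmem => h (Finset.mem_filter.mp hmem).2
        rw [if_neg hmem]; exact lt_of_le_of_ne (hle a ha) h
    · rintro ⟨S, ⟨hST, hcard⟩, hωD⟩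
      have hfe : T.filter (fun a => ξ a ω = i) = S := by
        ext a
        simp only [Finset.mem_filter]
        constructor
        · rintro ⟨haT, hv⟩
          by_contra hns
          have h2 := hωD a haT
          rw [if_neg hns] at h2
          simp only [Set.mem_setOf_eq] at h2
          omega
        · intro haS
          have haT := hST haS
          have h2 := hωD a haT
          rw [if_pos haS] at h2
          exact ⟨haT, h2⟩
      constructor
      · rw [hfe]; exact hcard
      · intro a haT
        have h2 := hωD a haT
        by_cases haS : a ∈ S
        · rw [if_pos haS] at h2; simp only [Set.mem_setOf_eq] at h2; omega
        · rw [if_neg haS] at h2; simp only [Set.mem_setOf_eq] at h2; omega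
  have hdisj : (↑(T.powersetCard j) : Set (Finset ℕ)).PairwiseDisjoint D := by
    intro S hS S' hS' hne
    simp only [Finset.mem_coe, Finset.mem_powersetCard] at hS hS'
    have hnsub : ¬ S ⊆ S' := by
      intro h
      exact hne (Finset.eq_of_subset_of_card_le h (by rw [hS.2, hS'.2]))
    obtain ⟨a, haS, haS'⟩ := Finset.not_subset.mp hnsub
    refine Set.disjoint_left.mpr fun ω h1 h2 => ?_
    have e1 := Set.mem_iInter₂.mp h1 a (hS.1 haS)
    have e2 := Set.mem_iInter₂.mp h2 a (hS.1 haS)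
    rw [if_pos haS] at e1
    rw [if_neg haS'] at e2
    simp only [Set.mem_setOf_eq] at e1 e2
    omega
  have hPD : ∀ S ∈ T.powersetCard j, P (D S) = pe ^ j * ql ^ (T.card - j) := by
    intro S hS
    obtain ⟨hsub, hcard⟩ := Finset.mem_powersetCard.mp hS
    have hm : ∀ a ∈ T, MeasurableSet[(inferInstance : MeasurableSpace ℕ).comap (ξ a)]
        (if a ∈ S then {ω | ξ a ω = i} else {ω | ξ a ω < i}) := by
      intro a _
      split
      · exact ⟨{i}, trivial, rfl⟩
      · exact ⟨Set.Iio i, trivial, rfl⟩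
    rw [hD]
    rw [hindep.meas_biInter hm]
    have hcg : ∀ a ∈ T, P (if a ∈ S then {ω | ξ a ω = i} else {ω | ξ a ω < i})
        = if a ∈ S then pe else ql := by
      intro a ha
      by_cases h : a ∈ S
      · rw [if_pos h, if_pos h]; exact hp a ha
      · rw [if_neg h, if_neg h]; exact hq a ha
    rw [Finset.prod_congr rfl hcg, Finset.prod_ite, Finset.prod_const, Finset.prod_const]
    have e1 : T.filter (fun a => a ∈ S) = S := by
      rw [Finset.filter_mem_eq_inter, Finset.inter_eq_right.mpr hsub]
    have e2 : T.filter (fun a => a ∉ S) = T \ S := (Finset.sdiff_eq_filter T S).symm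
    rw [e1, e2, hcard, Finset.card_sdiff_of_subset hsub, hcard]
  rw [hset, measure_biUnion_finset hdisj (fun S _ => hDmeas S),
    Finset.sum_congr rfl hPD, Finset.sum_const, Finset.card_powersetCard, nsmul_eq_mul]


theorem geometric_max_multiplicity_cond_dist
    {Ω : Type*} [MeasurableSpace Ω] (P : Measure Ω) [IsProbabilityMeasure P]
    (θ : ℝ) (hθ : θ ∈ Set.Ioo (0:ℝ) 1)
    (ξ : ℕ → Ω → ℕ)
    (hmeas : ∀ a, Measurable (ξ a))
    (hindep : iIndepFun ξ P)
    (hgeom : ∀ a, ∀ i : ℕ, P {ω | ξ a ω = i + 1} = ENNReal.ofReal (θ * (1 - θ) ^ i))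
    (M : ℕ → Ω → ℕ) (hM : ∀ n ω, M n ω = (Finset.range n).sup (fun a => ξ a ω))
    (L : ℕ → Ω → ℕ)
    (hL : ∀ n ω, L n ω = ((Finset.range n).filter (fun a => ξ a ω = M n ω)).card)
    (m n i k l : ℕ) (hmn : m < n) (hi : 1 ≤ i) (hk : 1 ≤ k) (hkm : k ≤ m) (hkl : k ≤ l)
    (hln : l - k ≤ n - m)
    (hpos : P {ω | M m ω = i ∧ L m ω = k} ≠ 0) :
    P[{ω | M n ω = i ∧ L n ω = l} | {ω | M m ω = i ∧ L m ω = k}] =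
      ENNReal.ofReal (((n - m).choose (l - k) : ℝ) * (θ * (1 - θ) ^ (i - 1)) ^ (l - k) *
        (1 - (1 - θ) ^ (i - 1)) ^ (n - m - (l - k))) := by
  classical
  obtain ⟨hθ0, hθ1⟩ := hθ
  have h1θ : (0:ℝ) ≤ 1 - θ := by linarith
  have hpow1 : (1 - θ) ^ (i - 1) ≤ 1 := pow_le_one₀ h1θ (by linarith)
  have hi1 : i - 1 + 1 = i := by omega
  set pe := ENNReal.ofReal (θ * (1 - θ) ^ (i - 1)) with hpe
  set ql := ENNReal.ofReal (1 - (1 - θ) ^ (i - 1)) with hql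
  -- single coordinate probabilities
  have hp : ∀ a, P {ω | ξ a ω = i} = pe := by
    intro a
    have h := hgeom a (i - 1)
    rwa [hi1] at h
  have hq : ∀ a, P {ω | ξ a ω < i} = ql :=
    fun a => gmmcd_lt P θ hθ0 hθ1 (ξ a) (hmeas a) (hgeom a) i hi
  set B := {ω | M m ω = i ∧ L m ω = k} with hB
  set C := {ω | ((Finset.Ico m n).filter fun a => ξ a ω = i).card = l - k
      ∧ ∀ a ∈ Finset.Ico m n, ξ a ω ≤ i} with hC
  have hrange : Finset.range n = Finset.range m ∪ Finset.Ico m n := by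
    rw [Finset.range_eq_Ico, Finset.range_eq_Ico]
    exact (Finset.Ico_union_Ico_eq_Ico (Nat.zero_le m) (le_of_lt hmn)).symm
  have hdisjmn : Disjoint (Finset.range m) (Finset.Ico m n) := by
    rw [Finset.range_eq_Ico]; exact Finset.Ico_disjoint_Ico_consecutive 0 m n
  have hdisjf : ∀ ω, Disjoint ((Finset.range m).filter fun a => ξ a ω = i)
      ((Finset.Ico m n).filter fun a => ξ a ω = i) :=
    fun ω => hdisjmn.mono (Finset.filter_subset _ _) (Finset.filter_subset _ _)
  -- the key combinatorial equivalence
  have key : ∀ ω ∈ B, ((M n ω = i ∧ L n ω = l) ↔ ω ∈ C) := by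
    rintro ω ⟨hMm, hLm⟩
    have hkcard : ((Finset.range m).filter fun a => ξ a ω = i).card = k := by
      have h2 := hL m ω
      rw [hMm] at h2
      rw [← h2]; exact hLm
    have hsup : M n ω = i ⊔ (Finset.Ico m n).sup (fun a => ξ a ω) := by
      rw [hM n ω, hrange, Finset.sup_union, ← hM m ω, hMm]
    constructor
    · rintro ⟨hMn, hLn⟩
      have hsle : (Finset.Ico m n).sup (fun a => ξ a ω) ≤ i :=
        sup_eq_left.mp (hsup.symm.trans hMn)
      have hle : ∀ a ∈ Finset.Ico m n, ξ a ω ≤ i :=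
        fun a ha => le_trans (Finset.le_sup (f := fun a => ξ a ω) ha) hsle
      refine ⟨?_, hle⟩
      have hcount : L n ω = k + ((Finset.Ico m n).filter fun a => ξ a ω = i).card := by
        rw [hL n ω, hMn, hrange, Finset.filter_union,
          Finset.card_union_of_disjoint (hdisjf ω), hkcard]
      omega
    · rintro ⟨hcard, hle⟩
      have hMn : M n ω = i := by
        rw [hsup]; exact sup_eq_left.mpr (Finset.sup_le hle)
      refine ⟨hMn, ?_⟩
      have hcount : L n ω = k + (l - k) := by
        rw [hL n ω, hMn, hrange, Finset.filter_union,
          Finset.card_union_of_disjoint (hdisjf ω), hkcard, hcard]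
      omega
  -- independence: B depends on coordinates < m, C on coordinates in [m, n)
  set f : Ω → (↑(Finset.range m) → ℕ) := fun ω a => ξ a ω with hf
  set g : Ω → (↑(Finset.Ico m n) → ℕ) := fun ω a => ξ a ω with hg
  have hfm : Measurable f := measurable_pi_lambda f fun a => hmeas a
  have hgm : Measurable g := measurable_pi_lambda g fun a => hmeas a
  set UB : Set (↑(Finset.range m) → ℕ) :=
    {v | Finset.univ.sup v = i ∧ (Finset.univ.filter fun a => v a = i).card = k} with hUB
  set UC : Set (↑(Finset.Ico m n) → ℕ) :=
    {v | (Finset.univ.filter fun a => v a = i).card = l - k ∧ ∀ a, v a ≤ i} with hUC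
  have esup : ∀ ω, (Finset.univ.sup fun a : ↑(Finset.range m) => ξ a ω)
      = (Finset.range m).sup fun a => ξ a ω := by
    intro ω
    rw [Finset.univ_eq_attach]
    exact Finset.sup_attach (Finset.range m) (fun a => ξ a ω)
  have ecard : ∀ (s : Finset ℕ) (ω : Ω),
      ((Finset.univ.filter fun a : ↑s => ξ a ω = i).card)
        = (s.filter fun a => ξ a ω = i).card := by
    intro s ω
    rw [Finset.univ_eq_attach, Finset.card_filter, Finset.card_filter]
    exact Finset.sum_attach s (fun a => if ξ a ω = i then 1 else 0)
  have hBf : B = f ⁻¹' UB := by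
    ext ω
    simp only [hB, hUB, Set.mem_setOf_eq, Set.mem_preimage, hf]
    constructor
    · rintro ⟨h1, h2⟩
      refine ⟨by rw [esup ω, ← hM m ω]; exact h1, ?_⟩
      rw [ecard]
      have h3 := hL m ω
      rw [h1] at h3
      rw [← h3]; exact h2
    · rintro ⟨h1, h2⟩
      have hm1 : M m ω = i := by rw [hM m ω, ← esup ω]; exact h1
      refine ⟨hm1, ?_⟩
      rw [hL m ω, hm1, ← ecard (Finset.range m) ω]; exact h2
  have hCg : C = g ⁻¹' UC := by
    ext ω
    simp only [hC, hUC, Set.mem_setOf_eq, Set.mem_preimage, hg]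
    constructor
    · rintro ⟨h1, h2⟩
      exact ⟨by rw [ecard]; exact h1, fun a => h2 a a.2⟩
    · rintro ⟨h1, h2⟩
      refine ⟨by rw [← ecard (Finset.Ico m n) ω]; exact h1, fun a ha => h2 ⟨a, ha⟩⟩
  have hUBm : MeasurableSet UB := (Set.to_countable UB).measurableSet
  have hUCm : MeasurableSet UC := (Set.to_countable UC).measurableSet
  have hBmeas : MeasurableSet B := hBf ▸ hfm hUBm
  have hIF : IndepFun f g P :=
    hindep.indepFun_finset (Finset.range m) (Finset.Ico m n) hdisjmn hmeas
  have hmul : P (B ∩ C) = P B * P C := by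
    rw [hBf, hCg]
    exact hIF.measure_inter_preimage_eq_mul UB UC hUBm hUCm
  -- put everything together
  rw [cond_apply hBmeas]
  have hBA : B ∩ {ω | M n ω = i ∧ L n ω = l} = B ∩ C :=
    Set.ext fun ω => and_congr_right fun hBω => key ω hBω
  rw [hBA, hmul, ← mul_assoc, ENNReal.inv_mul_cancel hpos (measure_ne_top P B), one_mul]
  have hbin := gmmcd_binom hmeas hindep (Finset.Ico m n) i (l - k) pe ql
    (fun a _ => hp a) (fun a _ => hq a)
  rw [Nat.card_Ico] at hbin
  rw [hC, hbin, hpe, hql, ← ENNReal.ofReal_natCast ((n - m).choose (l - k)),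
    ← ENNReal.ofReal_pow (by positivity), ← ENNReal.ofReal_pow (by linarith),
    ← ENNReal.ofReal_mul (by positivity), ← ENNReal.ofReal_mul (by positivity), mul_assoc]
end

section
/- The bivariate process Y_n = (M_n, L_n) of the running maximum and its multiplicity of an i.i.d. geometric(θ) sequence is a Markov chain on ℕ × ℕ with transition probabilities: from (i,k) it moves to (j,1) with probability θ(1-θ)^{j-1} for j > i, to (i,k+1) with probability θ(1-θ)^{i-1}, stays at (i,k) with probability 1 - (1-θ)^{i-1}, and all other transitions have probability 0. -/
open MeasureTheory ProbabilityTheory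

/-- The transition probabilities of the chain of maxima and their multiplicities. -/
def maxMultTrans (θ : ℝ) (i k j l : ℕ) : ℝ :=
  if i < j ∧ l = 1 then θ * (1 - θ) ^ (j - 1)
  else if j = i ∧ l = k + 1 then θ * (1 - θ) ^ (i - 1)
  else if j = i ∧ l = k then 1 - (1 - θ) ^ (i - 1)
  else 0

lemma mm_step_pair (f : ℕ → ℕ) (n i k : ℕ) (hi : (Finset.range n).sup f = i)
    (hk : ((Finset.range n).filter (fun a => f a = i)).card = k) :
    ((Finset.range (n+1)).sup f,
      ((Finset.range (n+1)).filter (fun a => f a = (Finset.range (n+1)).sup f)).card) =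
      if i < f n then (f n, 1) else if f n = i then (i, k+1) else (i, k) := by
  have hnot : n ∉ Finset.range n := by simp
  have hle : ∀ a ∈ Finset.range n, f a ≤ i := fun a ha => hi ▸ Finset.le_sup ha
  rw [Finset.range_add_one, Finset.sup_insert, hi]
  rcases lt_trichotomy i (f n) with h | h | h
  · have hs : f n ⊔ i = f n := sup_eq_left.mpr h.le
    rw [hs, if_pos h]
    have : (Finset.range n).filter (fun a => f a = f n) = ∅ := by
      apply Finset.filter_eq_empty_iff.mpr
      intro a ha hfa
      exact absurd (hfa ▸ hle a ha) (not_le.mpr h)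
    rw [Finset.filter_insert, if_pos rfl, this]
    simp
  · have hs : f n ⊔ i = i := by rw [← h]; exact sup_idem i
    rw [hs, if_neg (by omega), if_pos h.symm]
    rw [Finset.filter_insert, if_pos h.symm]
    rw [Finset.card_insert_of_notMem (fun hmem => hnot (Finset.mem_of_mem_filter n hmem)), hk]
  · have hs : f n ⊔ i = i := sup_eq_right.mpr h.le
    rw [hs, if_neg (by omega), if_neg (by omega)]
    rw [Finset.filter_insert, if_neg (by omega), hk]

lemma mm_case_iff (i k j l x : ℕ) :
    ((if i < x then (x,1) else if x = i then (i,k+1) else (i,k)) = ((j,l) : ℕ × ℕ)) ↔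
      x ∈ (if i < j ∧ l = 1 then ({j} : Set ℕ)
           else if j = i ∧ l = k + 1 then {i}
           else if j = i ∧ l = k then Set.Iio i else ∅) := by
  set_option maxHeartbeats 1000000 in
  split_ifs <;>
    simp only [Set.mem_singleton_iff, Set.mem_Iio, Set.mem_empty_iff_false, Prod.mk.injEq] <;>
    first
      | omega
      | (rw [iff_false]; rintro ⟨rfl, rfl⟩; simp_all)

lemma mm_zero_prob {Ω : Type*} [MeasurableSpace Ω] (P : Measure Ω) [IsProbabilityMeasure P]
    (θ : ℝ) (hθ : θ ∈ Set.Ioo (0:ℝ) 1) (f : Ω → ℕ) (hf : Measurable f)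
    (hg : ∀ i : ℕ, P {ω | f ω = i + 1} = ENNReal.ofReal (θ * (1 - θ) ^ i)) :
    P {ω | f ω = 0} = 0 := by
  obtain ⟨hθ0, hθ1⟩ := hθ
  have hU : (⋃ m, f ⁻¹' {m}) = Set.univ := by ext ω; simp
  have hd : Pairwise (Function.onFun Disjoint fun m => f ⁻¹' {m}) := fun a b hab =>
    Disjoint.preimage f (by simpa using hab)
  have hmu : P (⋃ m, f ⁻¹' {m}) = ∑' m, P (f ⁻¹' {m}) :=
    measure_iUnion hd (fun m => hf (measurableSet_singleton m))
  rw [hU, measure_univ] at hmu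
  rw [tsum_eq_zero_add' ENNReal.summable] at hmu
  have hpre : ∀ m : ℕ, f ⁻¹' {m} = {ω | f ω = m} := fun m => rfl
  have hsum : ∑' m : ℕ, P (f ⁻¹' {m + 1}) = 1 := by
    have h1 : ∀ m : ℕ, P (f ⁻¹' {m + 1}) = ENNReal.ofReal (θ * (1 - θ) ^ m) := by
      intro m; rw [hpre]; exact hg m
    rw [tsum_congr h1, ← ENNReal.ofReal_tsum_of_nonneg
        (fun m => mul_nonneg hθ0.le (pow_nonneg (by linarith) m))
        ((summable_geometric_of_lt_one (by linarith) (by linarith)).mul_left θ)]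
    rw [tsum_mul_left, tsum_geometric_of_lt_one (by linarith) (by linarith)]
    rw [show (1 : ℝ) - (1 - θ) = θ by ring]
    rw [mul_inv_cancel₀ (by linarith)]
    simp
  rw [hsum] at hmu
  have : P (f ⁻¹' {0}) + 1 = 0 + 1 := by rw [zero_add]; exact hmu.symm
  have h0 : P (f ⁻¹' {0}) = 0 :=
    (ENNReal.cancel_of_ne ENNReal.one_ne_top).inj_left.mp this
  rw [← hpre 0]; exact h0

lemma mm_lt_prob {Ω : Type*} [MeasurableSpace Ω] (P : Measure Ω) [IsProbabilityMeasure P]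
    (θ : ℝ) (hθ : θ ∈ Set.Ioo (0:ℝ) 1) (f : Ω → ℕ) (hf : Measurable f)
    (hg : ∀ i : ℕ, P {ω | f ω = i + 1} = ENNReal.ofReal (θ * (1 - θ) ^ i)) :
    ∀ i : ℕ, 1 ≤ i → P {ω | f ω < i} = ENNReal.ofReal (1 - (1 - θ) ^ (i - 1)) := by
  obtain ⟨hθ0, hθ1⟩ := hθ
  intro i hi
  induction i with
  | zero => omega
  | succ m ih =>
    rcases Nat.eq_or_lt_of_le hi with h1 | h1
    · -- m + 1 = 1, i.e. m = 0
      have hm : m = 0 := by omega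
      subst hm
      have : {ω | f ω < 1} = {ω | f ω = 0} := by ext ω; simp [Nat.lt_one_iff]
      rw [this, mm_zero_prob P θ ⟨hθ0, hθ1⟩ f hf hg]
      norm_num
    · have hm : 1 ≤ m := by omega
      have hsplit : {ω | f ω < m + 1} = {ω | f ω < m} ∪ {ω | f ω = m} := by
        ext ω; simp; omega
      have hdis : Disjoint {ω | f ω < m} {ω | f ω = m} := by
        rw [Set.disjoint_left]; intro ω h1 h2; simp at h1 h2; omega
      rw [hsplit, measure_union hdis (hf (measurableSet_singleton m)), ih hm]
      have hfm : {ω | f ω = m} = {ω | f ω = (m - 1) + 1} := by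
        ext ω; simp; omega
      rw [hfm, hg (m - 1)]
      rw [← ENNReal.ofReal_add (by nlinarith [pow_le_one₀ (by linarith : (0:ℝ) ≤ 1 - θ) (by linarith : (1:ℝ) - θ ≤ 1) (n := m - 1)]) (mul_nonneg hθ0.le (pow_nonneg (by linarith) _))]
      congr 1
      have : (1 - θ) ^ ((m:ℕ) - 1) * (1 - θ) = (1 - θ) ^ m := by
        rw [← pow_succ]
        congr 1
        omega
      have hms : m + 1 - 1 = m := by omega
      rw [hms]
      nlinarith [this]

theorem maxMult_is_markov_chain
    {Ω : Type*} [MeasurableSpace Ω] (P : Measure Ω) [IsProbabilityMeasure P]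
    (θ : ℝ) (hθ : θ ∈ Set.Ioo (0:ℝ) 1)
    (ξ : ℕ → Ω → ℕ)
    (hmeas : ∀ a, Measurable (ξ a))
    (hindep : iIndepFun ξ P)
    (hgeom : ∀ a, ∀ i : ℕ, P {ω | ξ a ω = i + 1} = ENNReal.ofReal (θ * (1 - θ) ^ i))
    (M : ℕ → Ω → ℕ) (hM : ∀ n ω, M n ω = (Finset.range n).sup (fun a => ξ a ω))
    (L : ℕ → Ω → ℕ)
    (hL : ∀ n ω, L n ω = ((Finset.range n).filter (fun a => ξ a ω = M n ω)).card)
    (Y : ℕ → Ω → ℕ × ℕ) (hY : ∀ n ω, Y n ω = (M n ω, L n ω))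
    (n : ℕ) (hn : 1 ≤ n) (y : ℕ → ℕ × ℕ) (i k j l : ℕ) (hy : y n = (i, k))
    (hpos : P {ω | ∀ s ∈ Finset.Icc 1 n, Y s ω = y s} ≠ 0) :
    P[{ω | Y (n + 1) ω = (j, l)} | {ω | ∀ s ∈ Finset.Icc 1 n, Y s ω = y s}] =
      ENNReal.ofReal (maxMultTrans θ i k j l) := by
  obtain ⟨hθ0, hθ1⟩ := hθ
  set B : Set Ω := {ω | ∀ s ∈ Finset.Icc 1 n, Y s ω = y s} with hB
  set T : Ω → (↥(Finset.range n) → ℕ) := fun ω a => ξ a ω with hT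
  have hTmeas : Measurable T := measurable_pi_lambda _ (fun a => hmeas a)
  set ext : (↥(Finset.range n) → ℕ) → ℕ → ℕ :=
    fun g a => if h : a ∈ Finset.range n then g ⟨a, h⟩ else 0 with hext
  set SB : Set (↥(Finset.range n) → ℕ) :=
    {g | ∀ s ∈ Finset.Icc 1 n,
      ((Finset.range s).sup (ext g),
        ((Finset.range s).filter
          (fun a => ext g a = (Finset.range s).sup (ext g))).card) = y s} with hSB
  -- B is the preimage of SB under T
  have hBT : B = T ⁻¹' SB := by
    ext ω
    simp only [hB, hSB, Set.mem_preimage, Set.mem_setOf_eq]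
    apply forall₂_congr
    intro s hs
    have hsn : s ≤ n := (Finset.mem_Icc.mp hs).2
    have hagree : ∀ a ∈ Finset.range s, ext (T ω) a = ξ a ω := by
      intro a ha
      have han : a ∈ Finset.range n :=
        Finset.mem_range.mpr (lt_of_lt_of_le (Finset.mem_range.mp ha) hsn)
      simp only [hext, hT, dif_pos han]
    have hsup : (Finset.range s).sup (ext (T ω)) = (Finset.range s).sup (fun a => ξ a ω) :=
      Finset.sup_congr rfl hagree
    have hfil : (Finset.range s).filter
          (fun a => ext (T ω) a = (Finset.range s).sup (ext (T ω)))
        = (Finset.range s).filter (fun a => ξ a ω = (Finset.range s).sup (fun a => ξ a ω)) := by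
      apply Finset.filter_congr
      intro a ha
      rw [hagree a ha, hsup]
    have hpair : ((Finset.range s).sup (ext (T ω)),
        ((Finset.range s).filter
          (fun a => ext (T ω) a = (Finset.range s).sup (ext (T ω)))).card) = Y s ω := by
      rw [hY, hL, hM, hsup]
      congr 1
      exact congrArg Finset.card (Finset.filter_congr (fun a ha => by rw [hagree a ha]))
    rw [← hpair]
  have hSBmeas : MeasurableSet SB := (Set.to_countable SB).measurableSet
  have hBmeas : MeasurableSet B := hBT ▸ hTmeas hSBmeas
  -- independence of T and ξ n
  have hindT : IndepFun T (ξ n) P := by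
    have h := hindep.indepFun_finset (Finset.range n) {n}
      (by simp [Finset.disjoint_left]; omega) hmeas
    have h2 := h.comp measurable_id
      (measurable_pi_apply (⟨n, by simp⟩ : ↥({n} : Finset ℕ)))
    exact h2
  -- i ≥ 1
  have hi1 : 1 ≤ i := by
    by_contra hcon
    have hi0 : i = 0 := by omega
    apply hpos
    have hsub : B ⊆ {ω | ξ 0 ω = 0} := by
      intro ω hω
      have hYn := hω n (Finset.mem_Icc.mpr ⟨hn, le_refl n⟩)
      rw [hY, hy, hi0, Prod.ext_iff] at hYn
      have hMn : M n ω = 0 := hYn.1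
      have hle : ξ 0 ω ≤ (Finset.range n).sup (fun a => ξ a ω) :=
        Finset.le_sup (f := fun a => ξ a ω) (Finset.mem_range.mpr hn)
      rw [hM] at hMn
      rw [hMn] at hle
      simpa using hle
    exact measure_mono_null hsub (mm_zero_prob P θ ⟨hθ0, hθ1⟩ (ξ 0) (hmeas 0) (hgeom 0))
  -- the target set for ξ n
  set S : Set ℕ := if i < j ∧ l = 1 then ({j} : Set ℕ)
      else if j = i ∧ l = k + 1 then {i}
      else if j = i ∧ l = k then Set.Iio i else ∅ with hS
  -- decomposition of the joint event
  have hAB : B ∩ {ω | Y (n + 1) ω = (j, l)} = (T ⁻¹' SB) ∩ (ξ n ⁻¹' S) := by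
    rw [← hBT]
    ext ω
    simp only [Set.mem_inter_iff, Set.mem_setOf_eq, Set.mem_preimage]
    refine and_congr_right fun hω => ?_
    have hYn := hω n (Finset.mem_Icc.mpr ⟨hn, le_refl n⟩)
    rw [hY, hy, Prod.ext_iff] at hYn
    have hMn : M n ω = i := hYn.1
    have hLn : L n ω = k := hYn.2
    rw [hL, hMn] at hLn
    rw [hM] at hMn
    have hstep := mm_step_pair (fun a => ξ a ω) n i k hMn hLn
    have hpair2 : Y (n + 1) ω = ((Finset.range (n+1)).sup (fun a => ξ a ω),
        ((Finset.range (n+1)).filter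
          (fun a => ξ a ω = (Finset.range (n+1)).sup (fun a => ξ a ω))).card) := by
      rw [hY, hL, hM]
    rw [hpair2, hstep, hS]
    exact mm_case_iff i k j l (ξ n ω)
  -- probability of the target set
  have hPS : P (ξ n ⁻¹' S) = ENNReal.ofReal (maxMultTrans θ i k j l) := by
    rw [hS]
    unfold maxMultTrans
    split_ifs with h1 h2 h3
    · have hj : j - 1 + 1 = j := by omega
      have : ξ n ⁻¹' {j} = {ω | ξ n ω = (j - 1) + 1} := by
        ext ω; simp [hj]
      rw [this, hgeom n (j - 1)]
    · have hi : i - 1 + 1 = i := by omega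
      have : ξ n ⁻¹' {i} = {ω | ξ n ω = (i - 1) + 1} := by
        ext ω; simp [hi]
      rw [this, hgeom n (i - 1)]
    · have : ξ n ⁻¹' Set.Iio i = {ω | ξ n ω < i} := rfl
      rw [this, mm_lt_prob P θ ⟨hθ0, hθ1⟩ (ξ n) (hmeas n) (hgeom n) i hi1]
    · simp
  -- independence factorization
  have hmul : P ((T ⁻¹' SB) ∩ (ξ n ⁻¹' S)) = P B * P (ξ n ⁻¹' S) := by
    rw [hBT]
    exact hindT.measure_inter_preimage_eq_mul SB S hSBmeas ((Set.to_countable S).measurableSet)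
  rw [cond_apply hBmeas P {ω | Y (n + 1) ω = (j, l)}, hAB, hmul, hPS, ← mul_assoc,
    ENNReal.inv_mul_cancel hpos (measure_ne_top P B), one_mul]
end

section
/- Let M_n and L_n be the maximum and its multiplicity of n i.i.d. geometric(θ) variables. Then L_n / n → 0 almost surely as n → ∞. -/
open MeasureTheory ProbabilityTheory Filter

theorem geometric_multiplicity_div_n_tendsto_zero
    {Ω : Type*} [MeasurableSpace Ω] (P : Measure Ω) [IsProbabilityMeasure P]
    (θ : ℝ) (hθ : θ ∈ Set.Ioo (0:ℝ) 1)
    (ξ : ℕ → Ω → ℕ)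
    (hmeas : ∀ a, Measurable (ξ a))
    (hindep : iIndepFun ξ P)
    (hgeom : ∀ a, ∀ i : ℕ, P {ω | ξ a ω = i + 1} = ENNReal.ofReal (θ * (1 - θ) ^ i))
    (M : ℕ → Ω → ℕ) (hM : ∀ n ω, M n ω = (Finset.range n).sup (fun a => ξ a ω))
    (L : ℕ → Ω → ℕ)
    (hL : ∀ n ω, L n ω = ((Finset.range n).filter (fun a => ξ a ω = M n ω)).card) :
    ∀ᵐ ω ∂P, Tendsto (fun n => (L n ω : ℝ) / n) atTop (nhds 0) := by
  classical
  obtain ⟨hθ0, hθ1⟩ := hθ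
  set q : ℝ := 1 - θ with hqdef
  have hq0 : 0 ≤ q := by simp [hqdef]; linarith
  have hq0' : 0 < q := by simp [hqdef]; linarith
  have hq1 : q < 1 := by simp [hqdef]; linarith
  -- measurability of level sets
  have hms : ∀ a m, MeasurableSet {ω | ξ a ω = m} := fun a m =>
    (hmeas a) (measurableSet_singleton m)
  -- tail probability
  have tail : ∀ a K, P {ω | K < ξ a ω} = ENNReal.ofReal (q ^ K) := by
    intro a K
    have hset : {ω | K < ξ a ω} = ⋃ i : ℕ, {ω | ξ a ω = K + i + 1} := by
      ext ω
      simp only [Set.mem_setOf_eq, Set.mem_iUnion]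
      constructor
      · intro h
        exact ⟨ξ a ω - K - 1, by omega⟩
      · rintro ⟨i, hi⟩; omega
    have hdisj : Pairwise (Function.onFun Disjoint (fun i => {ω | ξ a ω = K + i + 1})) := by
      intro i j hij
      refine Set.disjoint_left.2 ?_
      intro ω hωi hωj
      simp only [Set.mem_setOf_eq] at hωi hωj
      omega
    rw [hset, measure_iUnion hdisj (fun i => hms a _)]
    have hterm : ∀ i : ℕ, P {ω | ξ a ω = K + i + 1} = ENNReal.ofReal (θ * q ^ (K + i)) := by
      intro i; exact hgeom a (K + i)
    simp_rw [hterm]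
    have hfeq : (fun i : ℕ => θ * q ^ (K + i)) = fun i : ℕ => (θ * q ^ K) * q ^ i := by
      funext i; rw [pow_add]; ring
    have hsum : Summable (fun i : ℕ => θ * q ^ (K + i)) := by
      rw [hfeq]; exact (summable_geometric_of_lt_one hq0 hq1).mul_left _
    rw [← ENNReal.ofReal_tsum_of_nonneg (fun i => by positivity) hsum]
    congr 1
    rw [hfeq, tsum_mul_left, tsum_geometric_of_lt_one hq0 hq1]
    have h1q : 1 - q = θ := by simp [hqdef]
    rw [h1q]
    field_simp
  -- probability of being ≤ K
  have hle : ∀ a K, P {ω | ξ a ω ≤ K} = 1 - ENNReal.ofReal (q ^ K) := by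
    intro a K
    have hc : {ω | ξ a ω ≤ K} = {ω | K < ξ a ω}ᶜ := by
      ext ω; simp
    have hmeasK : MeasurableSet {ω | K < ξ a ω} := (hmeas a) measurableSet_Ioi
    rw [hc, measure_compl hmeasK (measure_ne_top _ _), tail a K, measure_univ]
  -- value 0 has probability 0
  have hzero : ∀ a, P {ω | ξ a ω = 0} = 0 := by
    intro a
    have : {ω | ξ a ω = 0} = {ω | ξ a ω ≤ 0} := by ext ω; simp
    rw [this, hle a 0]
    simp
  -- identical distribution
  have hident : ∀ a, IdentDistrib (ξ a) (ξ 0) P P := by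
    intro a
    refine ⟨(hmeas a).aemeasurable, (hmeas 0).aemeasurable, ?_⟩
    refine MeasureTheory.Measure.ext_of_singleton (fun k => ?_)
    rw [Measure.map_apply (hmeas a) (measurableSet_singleton k),
        Measure.map_apply (hmeas 0) (measurableSet_singleton k)]
    have hpre : ∀ b, ξ b ⁻¹' {k} = {ω | ξ b ω = k} := fun b => rfl
    rw [hpre, hpre]
    rcases k with _ | i
    · rw [hzero, hzero]
    · rw [hgeom a i, hgeom 0 i]
  -- the strong law for indicators
  have SLLN : ∀ K : ℕ, ∀ᵐ ω ∂P, Tendsto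
      (fun n : ℕ => (∑ a ∈ Finset.range n, (if ξ a ω ≤ K then (1:ℝ) else 0)) / n)
      atTop (nhds (1 - q ^ K)) := by
    intro K
    set f : ℕ → ℝ := fun m => if m ≤ K then (1:ℝ) else 0 with hf
    have hfm : Measurable f := measurable_of_countable f
    set X : ℕ → Ω → ℝ := fun a => f ∘ ξ a with hX
    have hXind : X 0 = (ξ 0 ⁻¹' Set.Iic K).indicator (fun _ => (1:ℝ)) := by
      funext ω
      by_cases h : ξ 0 ω ≤ K <;> simp [hX, hf, Set.indicator, h]
    have hint : Integrable (X 0) P := by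
      rw [hXind]
      exact (integrable_const (1:ℝ)).indicator ((hmeas 0) measurableSet_Iic)
    have hpind : Pairwise (Function.onFun (IndepFun · · P) X) := fun i j hij =>
      (hindep.indepFun hij).comp hfm hfm
    have hpid : ∀ i, IdentDistrib (X i) (X 0) P P := fun i => (hident i).comp hfm
    have hEX : (∫ ω, X 0 ω ∂P) = 1 - q ^ K := by
      rw [hXind, integral_indicator_const _ ((hmeas 0) measurableSet_Iic)]
      have : (ξ 0 ⁻¹' Set.Iic K) = {ω | ξ 0 ω ≤ K} := rfl
      rw [this, measureReal_def, hle 0 K]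
      have hle1 : ENNReal.ofReal (q ^ K) ≤ 1 := by
        rw [ENNReal.ofReal_le_one]
        exact pow_le_one₀ hq0 hq1.le
      rw [smul_eq_mul, mul_one, ENNReal.toReal_sub_of_le hle1 ENNReal.one_ne_top]
      rw [ENNReal.toReal_one, ENNReal.toReal_ofReal (by positivity)]
    have := strong_law_ae_real X hint hpind hpid
    rw [hEX] at this
    filter_upwards [this] with ω hω
    exact hω
  -- maximum escapes to infinity
  have ESC : ∀ K : ℕ, ∀ᵐ ω ∂P, ∀ᶠ n in atTop, K < M n ω := by
    intro K
    set C : Set Ω := ⋂ a, {ω | ξ a ω ≤ K} with hC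
    have hCzero : P C = 0 := by
      have hb : ∀ n : ℕ, P C ≤ (1 - ENNReal.ofReal (q ^ K)) ^ n := by
        intro n
        have h1 : P C ≤ P (⋂ a ∈ Finset.range n, {ω | ξ a ω ≤ K}) := by
          apply measure_mono
          intro ω hω
          rw [hC] at hω
          simp only [Set.mem_iInter] at hω ⊢
          exact fun a _ => hω a
        have h2 : P (⋂ a ∈ Finset.range n, {ω | ξ a ω ≤ K})
            = ∏ a ∈ Finset.range n, P {ω | ξ a ω ≤ K} :=
          hindep.meas_biInter (fun a _ => ⟨Set.Iic K, measurableSet_Iic, rfl⟩)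
        calc P C ≤ _ := h1
          _ = ∏ a ∈ Finset.range n, P {ω | ξ a ω ≤ K} := h2
          _ = (1 - ENNReal.ofReal (q ^ K)) ^ n := by
              simp [hle]
      have hlt1 : (1 : ENNReal) - ENNReal.ofReal (q ^ K) < 1 := by
        apply ENNReal.sub_lt_self ENNReal.one_ne_top one_ne_zero
        simp [ENNReal.ofReal_pos]
        positivity
      have htend := ENNReal.tendsto_pow_atTop_nhds_zero_of_lt_one hlt1
      have : P C ≤ 0 := ge_of_tendsto' htend hb
      exact le_antisymm this zero_le
    have hae : ∀ᵐ ω ∂P, ω ∉ C := measure_eq_zero_iff_ae_notMem.mp hCzero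
    filter_upwards [hae] with ω hω
    have : ∃ a, K < ξ a ω := by
      by_contra h
      push_neg at h
      have hmem : ω ∈ C := by
        rw [hC]
        exact Set.mem_iInter.2 fun a => by simpa using h a
      exact hω hmem
    obtain ⟨a, ha⟩ := this
    filter_upwards [eventually_ge_atTop (a + 1)] with n hn
    have hle' : ξ a ω ≤ M n ω := by
      rw [hM n ω]
      exact Finset.le_sup (f := fun b => ξ b ω) (Finset.mem_range.2 (by omega))
    exact lt_of_lt_of_le ha hle'
  -- combine
  filter_upwards [(ae_all_iff.2 SLLN).and (ae_all_iff.2 ESC)] with ω hω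
  obtain ⟨h1, h2⟩ := hω
  rw [NormedAddCommGroup.tendsto_nhds_zero]
  intro ε hε
  -- choose K with q ^ K < ε
  obtain ⟨K, hK⟩ : ∃ K : ℕ, q ^ K < ε :=
    ((tendsto_pow_atTop_nhds_zero_of_lt_one hq0 hq1).eventually
      (gt_mem_nhds hε)).exists
  have hlim : Tendsto (fun n : ℕ =>
      1 - (∑ a ∈ Finset.range n, (if ξ a ω ≤ K then (1:ℝ) else 0)) / n) atTop
      (nhds (q ^ K)) := by
    have := (tendsto_const_nhds (x := (1:ℝ)) (f := atTop)).sub (h1 K)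
    simpa using this
  filter_upwards [hlim.eventually_lt_const hK, h2 K, eventually_gt_atTop 0]
    with n hn hMn hn0
  have hnpos : (0:ℝ) < n := by exact_mod_cast hn0
  -- sum of indicators equals the cardinality
  have hSn : (∑ a ∈ Finset.range n, (if ξ a ω ≤ K then (1:ℝ) else 0))
      = ((Finset.range n).filter (fun a => ξ a ω ≤ K)).card := by
    rw [Finset.sum_boole]
  -- key cardinality bound
  have hcard : L n ω + ((Finset.range n).filter (fun a => ξ a ω ≤ K)).card ≤ n := by
    rw [hL]
    have hsub : (Finset.range n).filter (fun a => ξ a ω = M n ω)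
        ⊆ (Finset.range n).filter (fun a => ¬ ξ a ω ≤ K) := by
      intro a ha
      simp only [Finset.mem_filter] at ha ⊢
      exact ⟨ha.1, by omega⟩
    calc ((Finset.range n).filter (fun a => ξ a ω = M n ω)).card
          + ((Finset.range n).filter (fun a => ξ a ω ≤ K)).card
        ≤ ((Finset.range n).filter (fun a => ¬ ξ a ω ≤ K)).card
          + ((Finset.range n).filter (fun a => ξ a ω ≤ K)).card := by
          exact Nat.add_le_add_right (Finset.card_le_card hsub) _
      _ = n := by
          rw [add_comm, Finset.card_filter_add_card_filter_not,
            Finset.card_range]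
  have hLn : (L n ω : ℝ) / n ≤ 1 -
      (∑ a ∈ Finset.range n, (if ξ a ω ≤ K then (1:ℝ) else 0)) / n := by
    rw [hSn]
    rw [div_le_iff₀ hnpos, sub_mul, one_mul, div_mul_cancel₀ _ (ne_of_gt hnpos)]
    have : (L n ω : ℝ) + ((Finset.range n).filter (fun a => ξ a ω ≤ K)).card ≤ n := by
      exact_mod_cast hcard
    linarith
  have hnonneg : (0:ℝ) ≤ (L n ω : ℝ) / n := by positivity
  rw [Real.norm_of_nonneg hnonneg]
  exact lt_of_le_of_lt hLn hn
end
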